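/- Let S be a numerical semigroup minimally generated by n_1 < ... < n_b that is balanced, i.e., n_i + n_j = n_{i−1} + n_{j+1} for all i ≠ j in {2, ..., b−1}. Then for each torsion element x ∈ T with tord(x) = 1, any maximal expression x + n_1 = ∑_{i=2}^b s_i n_i in which s_2 is maximal, then s_3 maximal given s_2, etc., has at most one nonzero coefficient s_i with 2 ≤ i ≤ b−1 (i.e., it is of the form s_i n_i + s_b n_b for some single index i). -/

import Mathlib

open Finset

/-- Membership in the numerical semigroup generated by `n`. -/
def memS {b : ℕ} (n : Fin b → ℕ) (s : ℕ) : Prop :=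
  ∃ r : Fin b → ℕ, ∑ i, r i * n i = s

/-- The order of `s`: the largest number of generators (with repetition) summing to `s`. -/
noncomputable def ord {b : ℕ} (n : Fin b → ℕ) (s : ℕ) : ℕ :=
  sSup {k | ∃ r : Fin b → ℕ, (∑ i, r i * n i = s) ∧ ∑ i, r i = k}

/-- `r` is a maximal expression of `s`. -/
def IsMaxExpr {b : ℕ} (n : Fin b → ℕ) (s : ℕ) (r : Fin b → ℕ) : Prop :=
  (∑ i, r i * n i = s) ∧ ∑ i, r i = ord n s

/-- `s` is a torsion element: `ord (s + c·n₁) > ord s + c` for some `c > 0`. -/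
def Torsion {b : ℕ} [NeZero b] (n : Fin b → ℕ) (s : ℕ) : Prop :=
  ∃ c, 0 < c ∧ ord n s + c < ord n (s + c * n 0)

/-- The torsion order: least `c > 0` with `ord (s + c·n₁) > ord s + c`. -/
noncomputable def tord {b : ℕ} [NeZero b] (n : Fin b → ℕ) (s : ℕ) : ℕ :=
  sInf {c | 0 < c ∧ ord n s + c < ord n (s + c * n 0)}

/-- `n` is a minimal system of generators of a numerical semigroup,
listed increasingly. -/
def MinGen {b : ℕ} (n : Fin b → ℕ) : Prop :=
  StrictMono n ∧ (∀ i, 1 < n i) ∧ Finset.univ.gcd n = 1 ∧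
  ∀ i, ¬ ∃ r : Fin b → ℕ, r i = 0 ∧ ∑ j, r j * n j = n i

/-- The Apéry set of the semigroup generated by `n` with respect to `ν`. -/
def Ap {b : ℕ} (n : Fin b → ℕ) (ν : ℕ) : Set ℕ :=
  {s | memS n s ∧ ¬ ∃ t, memS n t ∧ t + ν = s}

/-- The `k`-fold sumset `kM` of the maximal ideal `M = S \ {0}`:
the elements of order at least `k`. -/
def powM {b : ℕ} (n : Fin b → ℕ) (k : ℕ) : Set ℕ :=
  {s | ∃ r : Fin b → ℕ, k ≤ ∑ i, r i ∧ ∑ i, r i * n i = s}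

/-- The reduction number: least `r` with `(r+1)M = n₁ + rM`. -/
noncomputable def redNum {b : ℕ} [NeZero b] (n : Fin b → ℕ) : ℕ :=
  sInf {r | powM n (r + 1) = (fun t => n 0 + t) '' powM n r}

/-- `sc` is the greedy (lexicographically maximal) maximal expression of `s`. -/
def Greedy {b : ℕ} (n : Fin b → ℕ) (s : ℕ) (sc : Fin b → ℕ) : Prop :=
  IsMaxExpr n s sc ∧ ∀ t : Fin b → ℕ, IsMaxExpr n s t →
    ∀ i : Fin b, (∀ j, j < i → t j = sc j) → t i ≤ sc i


lemma aux19 {b : ℕ} (n : Fin b → ℕ) (s : ℕ) (sc : Fin b → ℕ) (hsc : Greedy n s sc)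
    (i j i' j' : Fin b) (h1 : (i' : ℕ) < (i : ℕ)) (h2 : (i : ℕ) < (j : ℕ))
    (h3 : (j : ℕ) < (j' : ℕ)) (hbal1 : n i + n j = n i' + n j')
    (hi : sc i ≠ 0) (hj : sc j ≠ 0) : False := by
  obtain ⟨ai, hai⟩ : ∃ a, sc i = a + 1 := ⟨sc i - 1, by omega⟩
  obtain ⟨aj, haj⟩ : ∃ a, sc j = a + 1 := ⟨sc j - 1, by omega⟩
  have nji' : j' ≠ i' := Fin.ne_of_val_ne (by omega)
  have nii' : i ≠ i' := Fin.ne_of_val_ne (by omega)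
  have nij' : i ≠ j' := Fin.ne_of_val_ne (by omega)
  have nji'' : j ≠ i' := Fin.ne_of_val_ne (by omega)
  have njj' : j ≠ j' := Fin.ne_of_val_ne (by omega)
  have nij : j ≠ i := Fin.ne_of_val_ne (by omega)
  set t : Fin b → ℕ := fun k => if k = i' then sc i' + 1 else if k = j' then sc j' + 1
    else if k = i then ai else if k = j then aj else sc k with htdef
  have ti' : t i' = sc i' + 1 := by simp [htdef]
  have tj' : t j' = sc j' + 1 := by simp [htdef, nji']
  have ti : t i = ai := by simp [htdef, nii', nij']
  have tj : t j = aj := by simp [htdef, nji'', njj', nij]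
  set E : Finset (Fin b) := (((Finset.univ.erase i').erase j').erase i).erase j with hE
  have hm2 : j' ∈ Finset.univ.erase i' := by simp [nji']
  have hm3 : i ∈ (Finset.univ.erase i').erase j' := by simp [nii', nij']
  have hm4 : j ∈ ((Finset.univ.erase i').erase j').erase i := by simp [nji'', njj', nij]
  have key : ∀ f : Fin b → ℕ,
      ∑ k, f k = f i' + (f j' + (f i + (f j + ∑ k ∈ E, f k))) := by
    intro f
    rw [← Finset.add_sum_erase _ f (Finset.mem_univ i'), ← Finset.add_sum_erase _ f hm2,
      ← Finset.add_sum_erase _ f hm3, ← Finset.add_sum_erase _ f hm4]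
  have hteq : ∀ k ∈ E, t k = sc k := by
    intro k hk
    simp only [hE, Finset.mem_erase] at hk
    simp [htdef, hk.1, hk.2.1, hk.2.2.1, hk.2.2.2.1]
  have hrest : ∑ k ∈ E, t k = ∑ k ∈ E, sc k := Finset.sum_congr rfl hteq
  have hrestn : ∑ k ∈ E, t k * n k = ∑ k ∈ E, sc k * n k :=
    Finset.sum_congr rfl fun k hk => by rw [hteq k hk]
  have hsum1 : ∑ k, t k = ∑ k, sc k := by
    rw [key t, key sc, hrest, ti', tj', ti, tj, hai, haj]; omega
  have hsum2 : ∑ k, t k * n k = ∑ k, sc k * n k := by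
    rw [key (fun k => t k * n k), key (fun k => sc k * n k), hrestn,
      ti', tj', ti, tj, hai, haj]
    have e1 : (sc i' + 1) * n i' = sc i' * n i' + n i' := by ring
    have e2 : (sc j' + 1) * n j' = sc j' * n j' + n j' := by ring
    have e3 : (ai + 1) * n i = ai * n i + n i := by ring
    have e4 : (aj + 1) * n j = aj * n j + n j := by ring
    rw [e1, e2, e3, e4]
    have hb' := hbal1
    generalize sc i' * n i' = A at *
    generalize sc j' * n j' = B at *
    generalize ai * n i = C at *
    generalize aj * n j = D at *
    omega
  have hmax : IsMaxExpr n s t := ⟨by rw [hsum2]; exact hsc.1.1, by rw [hsum1]; exact hsc.1.2⟩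
  have hagree : ∀ k, k < i' → t k = sc k := by
    intro k hk
    have hk' : (k : ℕ) < (i' : ℕ) := hk
    have e1 : k ≠ i' := Fin.ne_of_val_ne (by omega)
    have e2 : k ≠ j' := Fin.ne_of_val_ne (by omega)
    have e3 : k ≠ i := Fin.ne_of_val_ne (by omega)
    have e4 : k ≠ j := Fin.ne_of_val_ne (by omega)
    simp [htdef, e1, e2, e3, e4]
  have hle := hsc.2 t hmax i' hagree
  rw [ti'] at hle
  omega

theorem stmt19 {b : ℕ} [NeZero b] (hb : 2 ≤ b) (n : Fin b → ℕ) (hmin : MinGen n)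
    (hbal : ∀ (i j : Fin b) (hi1 : 1 ≤ (i : ℕ)) (hi2 : (i : ℕ) < b - 1)
      (hj1 : 1 ≤ (j : ℕ)) (hj2 : (j : ℕ) < b - 1), i ≠ j →
      n i + n j = n ⟨(i : ℕ) - 1, by have := i.isLt; omega⟩ +
        n ⟨(j : ℕ) + 1, by have := j.isLt; omega⟩)
    (x : ℕ) (hx : Torsion n x) (ht : tord n x = 1)
    (sc : Fin b → ℕ) (hsc : Greedy n (x + n 0) sc) :
    ∀ i j : Fin b, 1 ≤ (i : ℕ) → (i : ℕ) < b - 1 → 1 ≤ (j : ℕ) →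
      (j : ℕ) < b - 1 → sc i ≠ 0 → sc j ≠ 0 → i = j := by
  intro i j hi1 hi2 hj1 hj2 hsi hsj
  by_contra hne
  have hvals : (i : ℕ) ≠ (j : ℕ) := fun h => hne (Fin.ext h)
  rcases Nat.lt_or_ge (i : ℕ) (j : ℕ) with hij | hij
  · exact aux19 n (x + n 0) sc hsc i j ⟨(i : ℕ) - 1, by omega⟩ ⟨(j : ℕ) + 1, by omega⟩
      (by show (i : ℕ) - 1 < (i : ℕ); omega) hij (by first | (simp; omega) | simp | omega)
      (hbal i j hi1 hi2 hj1 hj2 hne) hsi hsj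
  · exact aux19 n (x + n 0) sc hsc j i ⟨(j : ℕ) - 1, by omega⟩ ⟨(i : ℕ) + 1, by omega⟩
      (by show (j : ℕ) - 1 < (j : ℕ); omega) (by omega) (by first | (simp; omega) | simp | omega)
      (hbal j i hj1 hj2 hi1 hi2 (Ne.symm hne)) hsj hsi
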